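/- For p ∈ [0,1], a > 0, σ₁² > 0, σ₂² > 0, the function ℓ(p) = 2 f(p)(σ₁² p + σ₂² (1-p)) / (a f(p) + σ₁² p + σ₂² (1-p)), where f(p) = p(1-p), is concave on [0,1]. -/

import Mathlib

private lemma hm_concave (x1 y1 x2 y2 t u : ℝ) (hx1 : 0 ≤ x1) (hy1 : 0 < y1)
    (hx2 : 0 ≤ x2) (hy2 : 0 < y2) (ht : 0 ≤ t) (hu : 0 ≤ u) (htu : t + u = 1) :
    t * (x1 * y1 / (x1 + y1)) + u * (x2 * y2 / (x2 + y2)) ≤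
      (t * x1 + u * x2) * (t * y1 + u * y2) / ((t * x1 + u * x2) + (t * y1 + u * y2)) := by
  have hA : 0 < x1 + y1 := by linarith
  have hB : 0 < x2 + y2 := by linarith
  have hY : 0 < t * y1 + u * y2 := by
    rcases lt_or_eq_of_le ht with h | h
    · nlinarith
    · nlinarith
  have hC : 0 < (t * x1 + u * x2) + (t * y1 + u * y2) := by nlinarith
  rw [← mul_div_assoc, ← mul_div_assoc, div_add_div _ _ hA.ne' hB.ne',
    div_le_div_iff₀ (by positivity) hC]
  nlinarith [mul_nonneg (mul_nonneg ht hu) (sq_nonneg (x1 * y2 - x2 * y1)), sq_nonneg (t + u)]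

private lemma hm_mono (x x' y : ℝ) (hx : 0 ≤ x) (hxx : x ≤ x') (hy : 0 < y) :
    x * y / (x + y) ≤ x' * y / (x' + y) := by
  have h1 : 0 < x + y := by linarith
  have h2 : 0 < x' + y := by linarith
  rw [div_le_div_iff₀ h1 h2]
  nlinarith [sq_nonneg y]

private lemma spos (σ1 σ2 x : ℝ) (hσ1 : 0 < σ1) (hσ2 : 0 < σ2) (h0 : 0 ≤ x) (h1 : x ≤ 1) :
    0 < σ1 * x + σ2 * (1 - x) := by
  rcases lt_or_eq_of_le h0 with h | h
  · nlinarith [mul_pos hσ1 h, mul_nonneg hσ2.le (by linarith : (0:ℝ) ≤ 1 - x)]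
  · nlinarith

/-- Case IV current cost: for `a > 0`, `σ₁² > 0`, `σ₂² > 0`, the function
`ℓ(p) = 2 f(p)(σ₁² p + σ₂²(1-p)) / (a f(p) + σ₁² p + σ₂²(1-p))` with `f(p) = p(1-p)`
is concave on `[0,1]`. -/
theorem stmt_3 (a σ1 σ2 : ℝ) (ha : 0 < a) (hσ1 : 0 < σ1) (hσ2 : 0 < σ2) :
    ConcaveOn ℝ (Set.Icc (0 : ℝ) 1)
      (fun p => 2 * (p * (1 - p)) * (σ1 * p + σ2 * (1 - p)) /
        (a * (p * (1 - p)) + (σ1 * p + σ2 * (1 - p)))) := by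
  constructor
  · exact convex_Icc 0 1
  intro p hp q hq t u ht hu htu
  simp only [smul_eq_mul]
  obtain ⟨hp0, hp1⟩ := hp
  obtain ⟨hq0, hq1⟩ := hq
  set r := t * p + u * q with hr
  have hr0 : 0 ≤ r := by positivity
  have hr1 : r ≤ 1 := by nlinarith
  have hsp := spos σ1 σ2 p hσ1 hσ2 hp0 hp1
  have hsq := spos σ1 σ2 q hσ1 hσ2 hq0 hq1
  have hsr := spos σ1 σ2 r hσ1 hσ2 hr0 hr1
  have hfp : 0 ≤ p * (1 - p) := by nlinarith
  have hfq : 0 ≤ q * (1 - q) := by nlinarith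
  have hfr : 0 ≤ r * (1 - r) := by nlinarith
  have key : ∀ x : ℝ, 0 ≤ x * (1 - x) → 0 < σ1 * x + σ2 * (1 - x) →
      2 * (x * (1 - x)) * (σ1 * x + σ2 * (1 - x)) /
        (a * (x * (1 - x)) + (σ1 * x + σ2 * (1 - x))) =
      (2 / a) * ((a * (x * (1 - x))) * (σ1 * x + σ2 * (1 - x)) /
        ((a * (x * (1 - x))) + (σ1 * x + σ2 * (1 - x)))) := by
    intro x hfx hsx
    have hd : a * (x * (1 - x)) + (σ1 * x + σ2 * (1 - x)) ≠ 0 := by positivity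
    field_simp
  rw [key p hfp hsp, key q hfq hsq, key r hfr hsr]
  set Fp := a * (p * (1 - p)) with hFp
  set Fq := a * (q * (1 - q)) with hFq
  set Fr := a * (r * (1 - r)) with hFr
  set Sp := σ1 * p + σ2 * (1 - p) with hSp
  set Sq := σ1 * q + σ2 * (1 - q) with hSq
  set Sr := σ1 * r + σ2 * (1 - r) with hSr
  have h2a : 0 ≤ 2 / a := by positivity
  have hslin : t * Sp + u * Sq = Sr := by
    simp only [hSp, hSq, hSr, hr]; linear_combination σ2 * htu
  have hfcc : t * Fp + u * Fq ≤ Fr := by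
    have hu' : u = 1 - t := by linarith
    simp only [hFp, hFq, hFr, hr, hu']
    nlinarith [mul_nonneg (mul_nonneg (mul_nonneg ha.le ht) (by linarith : (0:ℝ) ≤ 1 - t))
      (sq_nonneg (p - q))]
  have step1 := hm_concave Fp Sp Fq Sq t u (by positivity) hsp (by positivity) hsq ht hu htu
  have step2 := hm_mono (t * Fp + u * Fq) Fr Sr
    (by positivity) hfcc hsr
  rw [hslin] at step1
  have main : t * (Fp * Sp / (Fp + Sp)) + u * (Fq * Sq / (Fq + Sq)) ≤
      Fr * Sr / (Fr + Sr) := le_trans step1 step2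
  calc t * (2 / a * (Fp * Sp / (Fp + Sp))) + u * (2 / a * (Fq * Sq / (Fq + Sq)))
      = (2 / a) * (t * (Fp * Sp / (Fp + Sp)) + u * (Fq * Sq / (Fq + Sq))) := by ring
    _ ≤ (2 / a) * (Fr * Sr / (Fr + Sr)) := mul_le_mul_of_nonneg_left main h2a
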